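/- Let n ≥ 2, let x_1, …, x_n, z_1, …, z_n, x̃_1, …, x̃_n be given points, and let f* be any real-valued function of the input pairs. Set V̄ := (1/(n−1))·Σ_{i=1}^n (f*(x_i,z_i) − (1/n)Σ_{i'=1}^n f*(x_{i'},z_{i'}))² and assume V̄ ≠ 0. When the floodgate estimators are computed with K = 1 and surrogate f = f* (so M_i = 0 and M_i^z = (1/2)(f*(x_i,z_i) − f*(x̃_i,z_i))² for each i), one has ℓ̂_n(f*) = û_n(f*) = Ŝ, where ℓ̂_n(f*) := (M̄^z − M̄)/V̄, û_n(f*) := M̄^z/V̄ (with M̄^z, M̄ the sample means of {M_i^z}, {M_i}), and Ŝ := [(1/(2n))·Σ_{i=1}^n (f*(x_i,z_i) − f*(x̃_i,z_i))²] / V̄ is the Jansen Sobol' pick-freeze estimator. -/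
import Mathlib

open scoped BigOperators

/-- With `K = 1` and surrogate `f = f*`, the floodgate point estimators coincide with the
Jansen Sobol' pick-freeze estimator: `ℓ̂_n(f*) = û_n(f*) = Ŝ`. This is a deterministic
algebraic identity over finite tuples of real numbers. -/
theorem floodgate_eq_jansen_when_f_eq_fstar
    {β : Type*} (n : ℕ) (hn : 2 ≤ n)
    (x : Fin n → ℝ) (z : Fin n → β) (xt : Fin n → ℝ)
    (fstar : ℝ → β → ℝ)
    (Vbar : ℝ)
    (hV : Vbar = (1 / ((n : ℝ) - 1)) *
      ∑ i, (fstar (x i) (z i) - (1 / (n : ℝ)) * ∑ i', fstar (x i') (z i')) ^ 2)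
    (hVne : Vbar ≠ 0)
    (M Mz : Fin n → ℝ)
    -- per-sample quantities with surrogate `f = f*` and `K = 1`,
    -- so `F_i^z = f*(x̃_i, z_i)`
    (hM : ∀ i, M i = (fstar (x i) (z i) - fstar (x i) (z i)) ^ 2)
    (hMz : ∀ i, Mz i = (fstar (x i) (z i) - fstar (xt i) (z i)) ^ 2
        - (1 / ((1 : ℝ) + 1)) * (fstar (x i) (z i) - fstar (xt i) (z i)) ^ 2) :
    ((((1 / (n : ℝ)) * ∑ i, Mz i) - (1 / (n : ℝ)) * ∑ i, M i) / Vbar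
        = ((1 / (2 * (n : ℝ))) * ∑ i, (fstar (x i) (z i) - fstar (xt i) (z i)) ^ 2) / Vbar)
    ∧ ((1 / (n : ℝ)) * ∑ i, Mz i) / Vbar
        = ((1 / (2 * (n : ℝ))) * ∑ i, (fstar (x i) (z i) - fstar (xt i) (z i)) ^ 2) / Vbar := by
  have hM0 : ∀ i, M i = 0 := by intro i; rw [hM]; ring
  have hMz' : ∀ i, Mz i = (1/2) * (fstar (x i) (z i) - fstar (xt i) (z i)) ^ 2 := by
    intro i; rw [hMz]; ring
  have hsM : ∑ i, M i = 0 := Finset.sum_eq_zero fun i _ => hM0 i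
  have hsMz : ∑ i, Mz i = (1/2) * ∑ i, (fstar (x i) (z i) - fstar (xt i) (z i)) ^ 2 := by
    rw [Finset.sum_congr rfl fun i _ => hMz' i, Finset.mul_sum]
  constructor <;> simp only [hsMz, hsM] <;> (congr 1; ring)
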